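/- Let A > 0 and Δ > 0. For N > 0 define the quartic polynomial p_N(ρ) = 144A²ρ⁴ + 48AΔρ³ + 4(Δ²−8A²N²)ρ² − 12AΔN²ρ − Δ²N². Then there is exactly one N > 0 for which p_N has a multiple root in ℂ (i.e. its discriminant vanishes), namely N = Δ·√(2·(145 + 99·3^{1/3} + 57·3^{2/3}))/(32A). -/

import Mathlib

open Polynomial

/-- The quartic `p_N(ρ) = 144A²ρ⁴ + 48AΔρ³ + 4(Δ²−8A²N²)ρ² − 12AΔN²ρ − Δ²N²`,
regarded as a polynomial over ℂ. -/
noncomputable def evenQuartic (A Δ N : ℝ) : Polynomial ℂ :=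
  C ((144 * A ^ 2 : ℝ) : ℂ) * X ^ 4 + C ((48 * A * Δ : ℝ) : ℂ) * X ^ 3
    + C ((4 * (Δ ^ 2 - 8 * A ^ 2 * N ^ 2) : ℝ) : ℂ) * X ^ 2
    - C ((12 * A * Δ * N ^ 2 : ℝ) : ℂ) * X - C ((Δ ^ 2 * N ^ 2 : ℝ) : ℂ)

lemma sq_dvd_iff_root {p : Polynomial ℂ} (hp : p ≠ 0) (z : ℂ) :
    (X - C z) ^ 2 ∣ p ↔ p.IsRoot z ∧ (derivative p).IsRoot z := by
  rw [← Polynomial.le_rootMultiplicity_iff hp]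
  have h := Polynomial.lt_rootMultiplicity_iff_isRoot_iterate_derivative_of_mem_nonZeroDivisors
    (p := p) (t := z) (n := 1) hp
    (by simpa using mem_nonZeroDivisors_of_ne_zero (one_ne_zero (α := ℂ)))
  constructor
  · intro h2
    have h3 := h.mp (by omega)
    exact ⟨by simpa using h3 0 (by norm_num), by simpa using h3 1 le_rfl⟩
  · rintro ⟨h0, h1⟩
    have h3 : 1 < p.rootMultiplicity z := by
      apply h.mpr
      intro k hk
      interval_cases k
      · simpa using h0
      · simpa using h1
    omega

lemma eval_evenQuartic (A Δ N : ℝ) (z : ℂ) :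
    (evenQuartic A Δ N).eval z =
      144 * (A : ℂ) ^ 2 * z ^ 4 + 48 * (A : ℂ) * (Δ : ℂ) * z ^ 3
        + 4 * ((Δ : ℂ) ^ 2 - 8 * (A : ℂ) ^ 2 * (N : ℂ) ^ 2) * z ^ 2
        - 12 * (A : ℂ) * (Δ : ℂ) * (N : ℂ) ^ 2 * z - (Δ : ℂ) ^ 2 * (N : ℂ) ^ 2 := by
  simp only [evenQuartic, eval_add, eval_sub, eval_mul, eval_pow, eval_C, eval_X]
  push_cast
  ring

lemma eval_derivative_evenQuartic (A Δ N : ℝ) (z : ℂ) :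
    (derivative (evenQuartic A Δ N)).eval z =
      576 * (A : ℂ) ^ 2 * z ^ 3 + 144 * (A : ℂ) * (Δ : ℂ) * z ^ 2
        + 8 * ((Δ : ℂ) ^ 2 - 8 * (A : ℂ) ^ 2 * (N : ℂ) ^ 2) * z
        - 12 * (A : ℂ) * (Δ : ℂ) * (N : ℂ) ^ 2 := by
  simp only [evenQuartic, derivative_sub, derivative_add, derivative_C_mul,
    derivative_X_pow, derivative_C, derivative_X, eval_add, eval_sub, eval_mul,
    eval_pow, eval_C, eval_X, eval_natCast, eval_one, eval_zero, mul_one]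
  push_cast
  ring

set_option maxHeartbeats 1600000 in
/-- For `A, Δ > 0` there is exactly one `N > 0` for which `p_N` has a multiple
root in ℂ, namely `N = Δ√(2(145 + 99·3^{1/3} + 57·3^{2/3}))/(32A)`. -/
theorem evenQuartic_multiple_root_iff (A Δ : ℝ) (hA : 0 < A) (hΔ : 0 < Δ) :
    0 < Δ * Real.sqrt (2 * (145 + 99 * (3 : ℝ) ^ ((1 : ℝ) / 3)
        + 57 * (3 : ℝ) ^ ((2 : ℝ) / 3))) / (32 * A) ∧
    ∀ N : ℝ, 0 < N →
      ((∃ z : ℂ, (X - C z) ^ 2 ∣ evenQuartic A Δ N) ↔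
        N = Δ * Real.sqrt (2 * (145 + 99 * (3 : ℝ) ^ ((1 : ℝ) / 3)
          + 57 * (3 : ℝ) ^ ((2 : ℝ) / 3))) / (32 * A)) := by
  have hA0 : A ≠ 0 := hA.ne'
  have hΔ0 : Δ ≠ 0 := hΔ.ne'
  have hAC : (A : ℂ) ≠ 0 := by exact_mod_cast hA0
  have hΔC : (Δ : ℂ) ≠ 0 := by exact_mod_cast hΔ0
  set r : ℝ := (3 : ℝ) ^ ((1 : ℝ) / 3) with hrdef
  have hr_pos : 0 < r := Real.rpow_pos_of_pos (by norm_num) _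
  have hr3 : r ^ 3 = 3 := by
    rw [hrdef, ← Real.rpow_natCast ((3 : ℝ) ^ ((1 : ℝ) / 3)) 3,
      ← Real.rpow_mul (by norm_num : (0:ℝ) ≤ 3)]
    norm_num
  have h23 : (3 : ℝ) ^ ((2 : ℝ) / 3) = r ^ 2 := by
    rw [hrdef, ← Real.rpow_natCast ((3 : ℝ) ^ ((1 : ℝ) / 3)) 2,
      ← Real.rpow_mul (by norm_num : (0:ℝ) ≤ 3)]
    norm_num
  rw [h23]
  have hS : (0:ℝ) < 2 * (145 + 99 * r + 57 * r ^ 2) := by positivity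
  set s : ℝ := Real.sqrt (2 * (145 + 99 * r + 57 * r ^ 2)) with hsdef
  have hs_pos : 0 < s := Real.sqrt_pos.mpr hS
  have hs2 : s ^ 2 = 2 * (145 + 99 * r + 57 * r ^ 2) := Real.sq_sqrt hS.le
  have hr3C : ((r : ℂ)) ^ 3 = 3 := by exact_mod_cast congrArg (fun t : ℝ => (t : ℂ)) hr3
  refine ⟨by positivity, ?_⟩
  intro N hN
  have hpne : evenQuartic A Δ N ≠ 0 := by
    intro h0
    have hc := eval_evenQuartic A Δ N 0
    rw [h0] at hc
    simp at hc
    rcases hc with h | h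
    · exact hΔ0 h
    · exact hN.ne' h
  have hrlb : (1.44 : ℝ) < r := by
    nlinarith [hr3, hr_pos, sq_nonneg (r - 1.44), sq_nonneg (r + 1.44)]
  have hrub : r < (1.45 : ℝ) := by
    nlinarith [hr3, hr_pos, sq_nonneg (r - 1.45), sq_nonneg (r + 1.45)]
  constructor
  · rintro ⟨z, hz⟩
    rw [sq_dvd_iff_root hpne] at hz
    obtain ⟨h0, h1⟩ := hz
    rw [Polynomial.IsRoot, eval_evenQuartic] at h0
    rw [Polynomial.IsRoot, eval_derivative_evenQuartic] at h1
    -- Bezout identity certificate: eliminates z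
    have hcx : ((N : ℂ)) ^ 2 * (512 * (A:ℂ)^6 * (N:ℂ)^6 * (Δ:ℂ)^2
        - 435 * (A:ℂ)^4 * (N:ℂ)^4 * (Δ:ℂ)^4 + 24 * (A:ℂ)^2 * (N:ℂ)^2 * (Δ:ℂ)^6
        - (Δ:ℂ)^8) = 0 := by
      linear_combination
        (1*(Δ:ℂ)^6 + 21*(N:ℂ)^2*(A:ℂ)^2*(Δ:ℂ)^4 - 2688*(N:ℂ)^4*(A:ℂ)^4*(Δ:ℂ)^2
          + 4096*(N:ℂ)^6*(A:ℂ)^6 - 36*z*(A:ℂ)*(Δ:ℂ)^5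
          + 2520*z*(N:ℂ)^2*(A:ℂ)^3*(Δ:ℂ)^3 - 2304*z*(N:ℂ)^4*(A:ℂ)^5*(Δ:ℂ)
          - 576*z^2*(A:ℂ)^2*(Δ:ℂ)^4 + 20880*z^2*(N:ℂ)^2*(A:ℂ)^4*(Δ:ℂ)^2
          - 36864*z^2*(N:ℂ)^4*(A:ℂ)^6) * h0 +
        ((-15/4)*(N:ℂ)^2*(A:ℂ)*(Δ:ℂ)^5 + (1041/4)*(N:ℂ)^4*(A:ℂ)^3*(Δ:ℂ)^3
          - 384*(N:ℂ)^6*(A:ℂ)^5*(Δ:ℂ) + (-1/2)*z*(Δ:ℂ)^6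
          + (-75/2)*z*(N:ℂ)^2*(A:ℂ)^2*(Δ:ℂ)^4 + 1236*z*(N:ℂ)^4*(A:ℂ)^4*(Δ:ℂ)^2
          - 2048*z*(N:ℂ)^6*(A:ℂ)^6 + 21*z^2*(A:ℂ)*(Δ:ℂ)^5
          - 1065*z^2*(N:ℂ)^2*(A:ℂ)^3*(Δ:ℂ)^3 + 1344*z^2*(N:ℂ)^4*(A:ℂ)^5*(Δ:ℂ)
          + 144*z^3*(A:ℂ)^2*(Δ:ℂ)^4 - 5220*z^3*(N:ℂ)^2*(A:ℂ)^4*(Δ:ℂ)^2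
          + 9216*z^3*(N:ℂ)^4*(A:ℂ)^6) * h1
    have hre : N ^ 2 * (512 * A^6 * N^6 * Δ^2 - 435 * A^4 * N^4 * Δ^4
        + 24 * A^2 * N^2 * Δ^6 - Δ^8) = 0 := by exact_mod_cast hcx
    have hcubic : 512 * A^6 * N^6 - 435 * A^4 * N^4 * Δ^2 + 24 * A^2 * N^2 * Δ^4
        - Δ^6 = 0 := by
      have h2 : N ^ 2 * Δ ^ 2 * (512 * A^6 * N^6 - 435 * A^4 * N^4 * Δ^2
          + 24 * A^2 * N^2 * Δ^4 - Δ^6) = 0 := by linear_combination hre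
      have h3 : N ^ 2 * Δ ^ 2 ≠ 0 := by positivity
      exact (mul_eq_zero.mp h2).resolve_left h3
    -- factor the cubic in A²N²
    have hfac : 512 * (A^2*N^2 - (145 + 99*r + 57*r^2)/512 * Δ^2) *
        (A^4*N^4 + (-145/256 + 99/512*r + 57/512*r^2) * A^2*N^2*Δ^2
          + (1/64 - 9/512*r + 3/512*r^2) * Δ^4) = 0 := by
      linear_combination hcubic -
        ((3249/512*(A^2*N^2)*Δ^4 + 171/512*Δ^6)*r
          + 5643/256*(A^2*N^2)*Δ^4 - 27/64*Δ^6) * hr3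
    have hq_pos : 0 < A^4*N^4 + (-145/256 + 99/512*r + 57/512*r^2) * A^2*N^2*Δ^2
        + (1/64 - 9/512*r + 3/512*r^2) * Δ^4 := by
      have hδ : (0:ℝ) < (1/64 - 9/512*r + 3/512*r^2)
          - (-145/256 + 99/512*r + 57/512*r^2)^2/4 := by
        nlinarith [hr3, hrlb, hrub, hr_pos, sq_nonneg (r - 1.4422), sq_nonneg (r^2 - 2.08)]
      have hid : A^4*N^4 + (-145/256 + 99/512*r + 57/512*r^2) * A^2*N^2*Δ^2
          + (1/64 - 9/512*r + 3/512*r^2) * Δ^4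
          = (A^2*N^2 + (-145/256 + 99/512*r + 57/512*r^2)*Δ^2/2)^2
            + ((1/64 - 9/512*r + 3/512*r^2)
              - (-145/256 + 99/512*r + 57/512*r^2)^2/4) * (Δ^2)^2 := by ring
      have hΔ4 : (0:ℝ) < (Δ^2)^2 := by positivity
      nlinarith [sq_nonneg (A^2*N^2 + (-145/256 + 99/512*r + 57/512*r^2)*Δ^2/2),
        mul_pos hδ hΔ4]
    have huv : A^2*N^2 - (145 + 99*r + 57*r^2)/512 * Δ^2 = 0 := by
      rcases mul_eq_zero.mp hfac with h | h
      · rcases mul_eq_zero.mp h with h' | h'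
        · norm_num at h'
        · exact h'
      · exact absurd h hq_pos.ne'
    -- conclude N = Δ s / (32 A)
    have hTA : 32 * A * (Δ * s / (32 * A)) = Δ * s := by field_simp
    have key : (N - Δ * s / (32 * A)) * (N + Δ * s / (32 * A)) * (1024 * A ^ 2)
        = 0 := by
      linear_combination 1024 * huv - Δ ^ 2 * hs2
        - (32 * A * (Δ * s / (32 * A)) + Δ * s) * hTA
    have hA1024 : (1024 : ℝ) * A ^ 2 ≠ 0 := by positivity
    rcases mul_eq_zero.mp key with h | h
    · rcases mul_eq_zero.mp h with h' | h'
      · linarith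
      · have : 0 < N + Δ * s / (32 * A) := by positivity
        linarith
    · exact absurd h hA1024
  · intro hNval
    -- N = Δ s/(32A); exhibit the double root
    have hTA : 32 * A * N = Δ * s := by rw [hNval]; field_simp
    have hu_re : A^2 * N^2 = Δ^2 * ((145 + 99*r + 57*r^2)/512) := by
      linear_combination ((32*A*N + Δ*s)/1024) * hTA + (Δ^2/1024) * hs2
    have hu : (A:ℂ)^2 * (N:ℂ)^2 = (Δ:ℂ)^2 * ((145 + 99*(r:ℂ) + 57*(r:ℂ)^2)/512) := by
      have := congrArg (fun t : ℝ => (t : ℂ)) hu_re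
      push_cast at this
      convert this using 2
    refine ⟨((Δ * (-(9 + 3*r + r^2)/48) / A : ℝ) : ℂ), ?_⟩
    rw [sq_dvd_iff_root hpne]
    set z₀ : ℂ := ((Δ * (-(9 + 3*r + r^2)/48) / A : ℝ) : ℂ) with hz₀def
    have hz : (A:ℂ) * z₀ = (Δ:ℂ) * (-(9 + 3*(r:ℂ) + (r:ℂ)^2)/48) := by
      rw [hz₀def]
      push_cast
      field_simp
    constructor
    · rw [Polynomial.IsRoot, eval_evenQuartic]
      have key : (A:ℂ)^2 * (144 * (A:ℂ)^2 * z₀^4 + 48 * (A:ℂ) * (Δ:ℂ) * z₀^3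
          + 4 * ((Δ:ℂ)^2 - 8 * (A:ℂ)^2 * (N:ℂ)^2) * z₀^2
          - 12 * (A:ℂ) * (Δ:ℂ) * (N:ℂ)^2 * z₀ - (Δ:ℂ)^2 * (N:ℂ)^2) = 0 := by
        linear_combination
          (144*(((A:ℂ)*z₀)^3 + ((A:ℂ)*z₀)^2*((Δ:ℂ)*(-(9+3*(r:ℂ)+(r:ℂ)^2)/48))
              + ((A:ℂ)*z₀)*((Δ:ℂ)*(-(9+3*(r:ℂ)+(r:ℂ)^2)/48))^2
              + ((Δ:ℂ)*(-(9+3*(r:ℂ)+(r:ℂ)^2)/48))^3)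
            + 48*(Δ:ℂ)*(((A:ℂ)*z₀)^2 + ((A:ℂ)*z₀)*((Δ:ℂ)*(-(9+3*(r:ℂ)+(r:ℂ)^2)/48))
              + ((Δ:ℂ)*(-(9+3*(r:ℂ)+(r:ℂ)^2)/48))^2)
            + 4*(Δ:ℂ)^2*(((A:ℂ)*z₀) + ((Δ:ℂ)*(-(9+3*(r:ℂ)+(r:ℂ)^2)/48)))
            - 32*((A:ℂ)^2*(N:ℂ)^2)*(((A:ℂ)*z₀) + ((Δ:ℂ)*(-(9+3*(r:ℂ)+(r:ℂ)^2)/48)))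
            - 12*(Δ:ℂ)*((A:ℂ)^2*(N:ℂ)^2)) * hz
          + (-32*((Δ:ℂ)*(-(9+3*(r:ℂ)+(r:ℂ)^2)/48))^2
              - 12*(Δ:ℂ)*((Δ:ℂ)*(-(9+3*(r:ℂ)+(r:ℂ)^2)/48)) - (Δ:ℂ)^2) * hu
          + ((Δ:ℂ)^4*(-77/6144 - 53/4096*(r:ℂ) - 25/6144*(r:ℂ)^2 + 17/36864*(r:ℂ)^3
              + 1/3072*(r:ℂ)^4 + 1/36864*(r:ℂ)^5)) * hr3C
      exact (mul_eq_zero.mp key).resolve_left (pow_ne_zero 2 hAC)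
    · rw [Polynomial.IsRoot, eval_derivative_evenQuartic]
      have key : (A:ℂ) * (576 * (A:ℂ)^2 * z₀^3 + 144 * (A:ℂ) * (Δ:ℂ) * z₀^2
          + 8 * ((Δ:ℂ)^2 - 8 * (A:ℂ)^2 * (N:ℂ)^2) * z₀
          - 12 * (A:ℂ) * (Δ:ℂ) * (N:ℂ)^2) = 0 := by
        linear_combination
          (576*(((A:ℂ)*z₀)^2 + ((A:ℂ)*z₀)*((Δ:ℂ)*(-(9+3*(r:ℂ)+(r:ℂ)^2)/48))
              + ((Δ:ℂ)*(-(9+3*(r:ℂ)+(r:ℂ)^2)/48))^2)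
            + 144*(Δ:ℂ)*(((A:ℂ)*z₀) + ((Δ:ℂ)*(-(9+3*(r:ℂ)+(r:ℂ)^2)/48)))
            + 8*(Δ:ℂ)^2 - 64*((A:ℂ)^2*(N:ℂ)^2)) * hz
          + (-64*((Δ:ℂ)*(-(9+3*(r:ℂ)+(r:ℂ)^2)/48)) - 12*(Δ:ℂ)) * hu
          + ((Δ:ℂ)^3*(5/64 - 9/128*(r:ℂ) - 3/64*(r:ℂ)^2 - 1/192*(r:ℂ)^3)) * hr3C
      exact (mul_eq_zero.mp key).resolve_left hAC
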